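/- Let q > 2 be odd and write n = qm + r with 0 ≤ r < q and m ≥ 1. Then f_{2,q}(n) = 1 + f_{2,q}(1) + f_{2,q}(2) + ⋯ + f_{2,q}(m). -/

import Mathlib

open Filter Real

/-- Number of representations of `n` as a sum of distinct terms of the form `p^a * q^b`. -/
noncomputable def fpq (p q n : ℕ) : ℕ :=
  Set.ncard {S : Finset ℕ | (∀ k ∈ S, ∃ a b : ℕ, k = p ^ a * q ^ b) ∧ S.sum id = n}

open scoped Classical

namespace Stmt8Aux

/-- The unique finset of powers of two summing to `s`. -/
def bin (s : ℕ) : Finset ℕ := s.bitIndices.toFinset.image (2 ^ ·)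

lemma bin_pow {s k : ℕ} (hk : k ∈ bin s) : ∃ a, k = 2 ^ a := by
  simp only [bin, Finset.mem_image] at hk
  obtain ⟨a, -, rfl⟩ := hk
  exact ⟨a, rfl⟩

lemma two_pow_inj : Function.Injective (fun a : ℕ => 2 ^ a) :=
  fun _ _ h => Nat.pow_right_injective (by norm_num) h

lemma sum_finset_eq_sorted (E : Finset ℕ) (f : ℕ → ℕ) :
    E.sum f = ((E.sort (· ≤ ·)).map f).sum := by
  rw [← List.sum_toFinset _ (E.sort_nodup (· ≤ ·)), Finset.sort_toFinset]

lemma sum_image_two_pow (E : Finset ℕ) :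
    (E.image (2 ^ ·)).sum id = ((E.sort (· ≤ ·)).map (2 ^ ·)).sum := by
  rw [Finset.sum_image (fun a _ b _ h => two_pow_inj h)]
  exact sum_finset_eq_sorted E _

lemma log2_two_pow (a : ℕ) : Nat.log2 (2 ^ a) = a := by
  rw [Nat.log2_eq_log_two, Nat.log_pow one_lt_two]

lemma bin_eq {S : Finset ℕ} (h : ∀ k ∈ S, ∃ a, k = 2 ^ a) : bin (S.sum id) = S := by
  have hpow : ∀ k ∈ S, 2 ^ Nat.log2 k = k := by
    intro k hk; obtain ⟨a, rfl⟩ := h k hk; rw [log2_two_pow]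
  set E := S.image Nat.log2 with hE
  have hSE : S = E.image (2 ^ ·) := by
    ext k
    simp only [hE, Finset.mem_image, exists_exists_and_eq_and]
    constructor
    · intro hk; exact ⟨k, hk, hpow k hk⟩
    · rintro ⟨k', hk', rfl⟩; rw [hpow k' hk']; exact hk'
  have hsum : S.sum id = ((E.sort (· ≤ ·)).map (2 ^ ·)).sum := by
    rw [hSE, sum_image_two_pow]
  have hbits : (S.sum id).bitIndices = E.sort (· ≤ ·) := by
    rw [hsum, Nat.bitIndices_twoPowsum (Finset.sortedLT_sort E)]
  rw [bin, hbits, Finset.sort_toFinset, ← hSE]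

lemma bin_sum (s : ℕ) : (bin s).sum id = s := by
  rw [bin, Finset.sum_image (fun a _ b _ h => two_pow_inj h)]
  rw [List.sum_toFinset _ (Nat.bitIndices_sorted (n := s)).nodup]
  exact Nat.twoPowSum_bitIndices s

/-- The predicate on sets. -/
def P (q : ℕ) (S : Finset ℕ) : Prop := ∀ k ∈ S, ∃ a b : ℕ, k = 2 ^ a * q ^ b

/-- Finset version of the set of representations. -/
noncomputable def A (q n : ℕ) : Finset (Finset ℕ) :=
  (Finset.range (n + 1)).powerset.filter (fun S => P q S ∧ S.sum id = n)

lemma mem_A {q n : ℕ} {S : Finset ℕ} :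
    S ∈ A q n ↔ P q S ∧ S.sum id = n := by
  rw [A, Finset.mem_filter, Finset.mem_powerset, and_iff_right_iff_imp]
  rintro ⟨hP, hsum⟩
  intro k hk
  rw [Finset.mem_range, Nat.lt_succ_iff, ← hsum]
  exact Finset.single_le_sum (f := id) (fun _ _ => Nat.zero_le _) hk

lemma fpq_eq (q n : ℕ) : fpq 2 q n = (A q n).card := by
  rw [fpq, ← Set.ncard_coe_finset]
  congr 1
  ext S
  simp only [Set.mem_setOf_eq, Finset.mem_coe, mem_A]
  rfl

/-- the fiber map -/
noncomputable def phi (q : ℕ) (S : Finset ℕ) : ℕ := (S.filter (q ∣ ·)).sum id / q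

lemma q_dvd_filter_sum (q : ℕ) (S : Finset ℕ) : q ∣ (S.filter (q ∣ ·)).sum id :=
  Finset.dvd_sum (fun k hk => (Finset.mem_filter.mp hk).2)

section Main

variable {q : ℕ} (hq : 2 < q) (hodd : Odd q)

include hq hodd

lemma not_q_dvd_two_pow (a : ℕ) : ¬ q ∣ 2 ^ a := by
  intro h
  have hc : Nat.Coprime q 2 := hodd.coprime_two_right
  have := Nat.Coprime.eq_one_of_dvd (hc.pow_right a) h
  omega

lemma elem_dvd {k : ℕ} (h : ∃ a b : ℕ, k = 2 ^ a * q ^ b) (hdvd : q ∣ k) :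
    ∃ a b : ℕ, k = q * (2 ^ a * q ^ b) := by
  obtain ⟨a, b, rfl⟩ := h
  cases b with
  | zero =>
    exfalso
    apply not_q_dvd_two_pow hq hodd a
    simpa using hdvd
  | succ b => exact ⟨a, b, by ring⟩

omit hq hodd in
lemma elem_not_dvd {k q : ℕ} (h : ∃ a b : ℕ, k = 2 ^ a * q ^ b) (hdvd : ¬ q ∣ k) :
    ∃ a : ℕ, k = 2 ^ a := by
  obtain ⟨a, b, rfl⟩ := h
  cases b with
  | zero => exact ⟨a, by simp⟩
  | succ b => exact absurd ⟨2 ^ a * q ^ b, by ring⟩ hdvd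

lemma card_fiber {n t : ℕ} (ht : q * t ≤ n) :
    ((A q n).filter (fun S => phi q S = t)).card = (A q t).card := by
  have hq0 : 0 < q := by omega
  -- facts about elements of the fiber
  have fiber_facts : ∀ S ∈ (A q n).filter (fun S => phi q S = t),
      P q S ∧ S.sum id = n ∧ (S.filter (q ∣ ·)).sum id = q * t ∧
      (S.filter (fun k => ¬ q ∣ k)).sum id = n - q * t := by
    intro S hS
    rw [Finset.mem_filter, mem_A] at hS
    obtain ⟨⟨hP, hsum⟩, hphi⟩ := hS
    simp only [phi] at hphi
    have h1 : (S.filter (q ∣ ·)).sum id = q * t := by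
      have hd := Nat.mul_div_cancel' (q_dvd_filter_sum q S)
      rw [hphi] at hd
      exact hd.symm
    have h2 : (S.filter (q ∣ ·)).sum id + (S.filter (fun k => ¬ q ∣ k)).sum id = n := by
      rw [Finset.sum_filter_add_sum_filter_not, hsum]
    exact ⟨hP, hsum, h1, by omega⟩
  apply Finset.card_nbij' (fun S => (S.filter (q ∣ ·)).image (· / q))
    (fun T => bin (n - q * t) ∪ T.image (q * ·))
  · -- forward maps into A q t
    intro S hS
    obtain ⟨hP, hsum, hqt, -⟩ := fiber_facts S hS
    have hdiv_inj : ∀ x ∈ S.filter (q ∣ ·), ∀ y ∈ S.filter (q ∣ ·), x / q = y / q → x = y := by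
      intro x hx y hy hxy
      have hx' := (Finset.mem_filter.mp hx).2
      have hy' := (Finset.mem_filter.mp hy).2
      rw [← Nat.div_mul_cancel hx', ← Nat.div_mul_cancel hy', hxy]
    simp only [Finset.mem_coe]
    rw [mem_A]
    constructor
    · intro k hk
      rw [Finset.mem_image] at hk
      obtain ⟨k', hk', rfl⟩ := hk
      rw [Finset.mem_filter] at hk'
      obtain ⟨a, b, hab⟩ := elem_dvd hq hodd (hP k' hk'.1) hk'.2
      exact ⟨a, b, by rw [hab, Nat.mul_div_cancel_left _ hq0]⟩
    · rw [Finset.sum_image hdiv_inj]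
      have : q * ∑ k ∈ S.filter (q ∣ ·), id (k / q) = q * t := by
        rw [Finset.mul_sum, ← hqt]
        exact Finset.sum_congr rfl fun k hk =>
          Nat.mul_div_cancel' (Finset.mem_filter.mp hk).2
      exact Nat.eq_of_mul_eq_mul_left hq0 this
  · -- backward maps into the fiber
    intro T hT
    simp only [Finset.mem_coe] at hT ⊢
    rw [mem_A] at hT
    obtain ⟨hPT, hTsum⟩ := hT
    have hmul_inj : ∀ x ∈ T, ∀ y ∈ T, q * x = q * y → x = y :=
      fun x _ y _ h => Nat.eq_of_mul_eq_mul_left hq0 h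
    have hCsum : (T.image (q * ·)).sum id = q * t := by
      rw [Finset.sum_image hmul_inj]
      simp only [id]
      rw [← Finset.mul_sum]
      exact congrArg _ hTsum
    have hBnot : ∀ k ∈ bin (n - q * t), ¬ q ∣ k := by
      intro k hk hdvd
      obtain ⟨a, rfl⟩ := bin_pow hk
      exact not_q_dvd_two_pow hq hodd a hdvd
    have hCdvd : ∀ k ∈ T.image (q * ·), q ∣ k := by
      intro k hk
      rw [Finset.mem_image] at hk
      obtain ⟨k', -, rfl⟩ := hk
      exact Dvd.intro k' rfl
    have hdisj : Disjoint (bin (n - q * t)) (T.image (q * ·)) := by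
      rw [Finset.disjoint_left]
      intro k hk hk'
      exact hBnot k hk (hCdvd k hk')
    have hfilter : (bin (n - q * t) ∪ T.image (q * ·)).filter (q ∣ ·) = T.image (q * ·) := by
      rw [Finset.filter_union]
      rw [Finset.filter_false_of_mem hBnot, Finset.filter_true_of_mem hCdvd]
      exact Finset.empty_union _
    rw [Finset.mem_filter, mem_A]
    refine ⟨⟨?_, ?_⟩, ?_⟩
    · intro k hk
      rw [Finset.mem_union] at hk
      rcases hk with hk | hk
      · obtain ⟨a, rfl⟩ := bin_pow hk
        exact ⟨a, 0, by simp⟩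
      · rw [Finset.mem_image] at hk
        obtain ⟨k', hk', rfl⟩ := hk
        obtain ⟨a, b, rfl⟩ := hPT k' hk'
        exact ⟨a, b + 1, by ring⟩
    · rw [Finset.sum_union hdisj, bin_sum, hCsum]
      omega
    · simp only [phi, hfilter, hCsum]
      exact Nat.mul_div_cancel_left t hq0
  · -- left inverse
    intro S hS
    obtain ⟨hP, hsum, hqt, h0⟩ := fiber_facts S hS
    have himg : ((S.filter (q ∣ ·)).image (· / q)).image (q * ·) = S.filter (q ∣ ·) := by
      rw [Finset.image_image]
      have : ∀ k ∈ S.filter (q ∣ ·), ((q * ·) ∘ (· / q)) k = id k := by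
        intro k hk
        exact Nat.mul_div_cancel' (Finset.mem_filter.mp hk).2
      rw [Finset.image_congr this, Finset.image_id]
    have hbin : bin (n - q * t) = S.filter (fun k => ¬ q ∣ k) := by
      rw [← h0]
      exact bin_eq (fun k hk => elem_not_dvd (hP k (Finset.filter_subset _ _ hk))
        (Finset.mem_filter.mp hk).2)
    beta_reduce
    rw [himg, hbin, Finset.union_comm, Finset.filter_union_filter_not_eq]
  · -- right inverse
    intro T hT
    simp only [Finset.mem_coe] at hT
    beta_reduce
    rw [mem_A] at hT
    obtain ⟨hPT, hTsum⟩ := hT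
    have hBnot : ∀ k ∈ bin (n - q * t), ¬ q ∣ k := by
      intro k hk hdvd
      obtain ⟨a, rfl⟩ := bin_pow hk
      exact not_q_dvd_two_pow hq hodd a hdvd
    have hCdvd : ∀ k ∈ T.image (q * ·), q ∣ k := by
      intro k hk
      rw [Finset.mem_image] at hk
      obtain ⟨k', -, rfl⟩ := hk
      exact Dvd.intro k' rfl
    have hfilter : (bin (n - q * t) ∪ T.image (q * ·)).filter (q ∣ ·) = T.image (q * ·) := by
      rw [Finset.filter_union]
      rw [Finset.filter_false_of_mem hBnot, Finset.filter_true_of_mem hCdvd]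
      exact Finset.empty_union _
    rw [hfilter, Finset.image_image]
    have : ∀ k ∈ T, ((· / q) ∘ (q * ·)) k = id k := by
      intro k _
      exact Nat.mul_div_cancel_left k hq0
    rw [Finset.image_congr this, Finset.image_id]

lemma card_A (n : ℕ) : (A q n).card = ∑ t ∈ Finset.range (n / q + 1), (A q t).card := by
  have hq0 : 0 < q := by omega
  have hmaps : ∀ S ∈ A q n, phi q S ∈ Finset.range (n / q + 1) := by
    intro S hS
    rw [mem_A] at hS
    obtain ⟨hP, hsum⟩ := hS
    rw [Finset.mem_range, Nat.lt_succ_iff, phi]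
    apply Nat.div_le_div_right
    rw [← hsum]
    exact Finset.sum_le_sum_of_subset (Finset.filter_subset _ _)
  rw [Finset.card_eq_sum_card_fiberwise hmaps]
  refine Finset.sum_congr rfl fun t ht => ?_
  rw [Finset.mem_range, Nat.lt_succ_iff] at ht
  exact card_fiber hq hodd (by rw [mul_comm]; exact (Nat.le_div_iff_mul_le hq0).mp ht)

lemma card_A_zero : (A q 0).card = 1 := by
  have : A q 0 = {∅} := by
    ext S
    rw [mem_A, Finset.mem_singleton]
    constructor
    · rintro ⟨hP, hsum⟩
      rw [Finset.eq_empty_iff_forall_notMem]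
      intro k hk
      obtain ⟨a, b, rfl⟩ := hP k hk
      have h1 : 0 < 2 ^ a * q ^ b := by positivity
      have h2 := Finset.sum_eq_zero_iff.mp hsum _ hk
      simp only [id] at h2
      omega
    · rintro rfl
      exact ⟨fun k hk => absurd hk (Finset.notMem_empty k), rfl⟩
  rw [this, Finset.card_singleton]
end Main
end Stmt8Aux

open Stmt8Aux in
theorem stmt8 (q : ℕ) (hq : 2 < q) (hodd : Odd q) (m r : ℕ) (hm : 1 ≤ m) (hr : r < q) :
    fpq 2 q (q * m + r) = 1 + ∑ i ∈ Finset.Icc 1 m, fpq 2 q i := by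
  have hq0 : 0 < q := by omega
  have hdiv : (q * m + r) / q = m := by
    rw [Nat.mul_add_div hq0, Nat.div_eq_of_lt hr, add_zero]
  rw [fpq_eq, card_A hq hodd, hdiv]
  have hins : Finset.range (m + 1) = insert 0 (Finset.Icc 1 m) := by
    ext x; simp; omega
  rw [hins, Finset.sum_insert (by simp), card_A_zero hq hodd]
  congr 1
  exact Finset.sum_congr rfl fun i _ => (fpq_eq q i).symm
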